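/- Let V' be a nonempty set of vertices of the tree G such that the subgraph induced by G on V' is connected, and let o' ∈ V' be the unique vertex with d o o' ≤ d o x for all x ∈ V'. Then for every x ∈ V' one has d o x = d o o' + d o' x; that is, o' lies on the unique path in G joining the root o to any vertex of V'. -/

import Mathlib

open SimpleGraph Walk

/-- In a tree, every path realizes the distance between its endpoints. -/
private lemma tree_path_length_eq_dist {V : Type*} {G : SimpleGraph V} (hG : G.IsTree)
    {a b : V} {p : G.Walk a b} (hp : p.IsPath) : p.length = G.dist a b := by
  obtain ⟨w, hw⟩ := hG.isConnected.exists_walk_length_eq_dist a b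
  have hwp : w.IsPath := w.isPath_of_length_eq_dist hw
  have : (⟨p, hp⟩ : G.Path a b) = ⟨w, hwp⟩ := hG.IsAcyclic.path_unique _ _
  rw [show p = w from congrArg Subtype.val this, hw]

/-- Splitting a path of a tree at a vertex on it gives an additive distance relation. -/
private lemma tree_split {V : Type*} {G : SimpleGraph V} (hG : G.IsTree)
    {a b m : V} {p : G.Walk a b} (hp : p.IsPath) (hm : m ∈ p.support) :
    G.dist a b = G.dist a m + G.dist m b := by
  classical
  have hs := congrArg Walk.length (p.take_spec hm)
  rw [Walk.length_append] at hs
  rw [← tree_path_length_eq_dist hG hp, ← hs,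
    tree_path_length_eq_dist hG (hp.takeUntil hm), tree_path_length_eq_dist hG (hp.dropUntil hm)]

/-- If `o'` is the root of a nonempty connected set of vertices `V'` of a tree (the unique
vertex of `V'` closest to the root `o`), then `o'` lies on the unique path from `o` to any
vertex of `V'`: `d o x = d o o' + d o' x` for all `x ∈ V'`. -/
theorem subtree_root_on_geodesics {V : Type*} (G : SimpleGraph V) (hG : G.IsTree) (o : V)
    (V' : Set V) (hne : V'.Nonempty) (hconn : (G.induce V').Connected)
    (o' : V) (ho' : o' ∈ V') (hmin : ∀ x ∈ V', G.dist o o' ≤ G.dist o x) :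
    ∀ x ∈ V', G.dist o x = G.dist o o' + G.dist o' x := by
  classical
  -- Invariant: there is a path from `o` to the current vertex passing through `o'`.
  have key : ∀ {a b : ↥V'} (_ : (G.induce V').Walk a b)
      (_ : ∃ p : G.Walk o a, p.IsPath ∧ o' ∈ p.support),
      ∃ p : G.Walk o (b : V), p.IsPath ∧ o' ∈ p.support := by
    intro a b w
    induction w with
    | nil => exact id
    | @cons a c b hadj w ih =>
      intro ⟨p, hp, ho'p⟩
      apply ih
      have hadj' : G.Adj (a : V) (c : V) := hadj
      by_cases hc : (c : V) ∈ p.support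
      · -- `c` already on the path; `o'` must be on the initial segment, else contradiction
        refine ⟨p.takeUntil c hc, hp.takeUntil hc, ?_⟩
        by_contra ho'q
        -- then `o'` lies on the tail segment from `c` to `a`
        have ho'D : o' ∈ (p.dropUntil c hc).support := by
          have := p.take_spec hc
          rw [← this, Walk.mem_support_append_iff] at ho'p
          tauto
        have hco' : (c : V) ≠ o' := by
          rintro rfl
          exact ho'q (Walk.end_mem_support _)
        -- distances add up along the path `p`
        have h1 : G.dist o a = G.dist o o' + G.dist o' a := tree_split hG hp ho'p
        have h2 : G.dist o a = G.dist o c + G.dist (c : V) a := tree_split hG hp hc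
        have h3 : G.dist (c : V) a = G.dist (c : V) o' + G.dist o' a :=
          tree_split hG (hp.dropUntil hc) ho'D
        have h4 : 0 < G.dist (c : V) o' := hG.isConnected.pos_dist_of_ne hco'
        have h5 : G.dist o o' ≤ G.dist o (c : V) := hmin _ c.2
        omega
      · -- extend the path by the edge `a c`
        have hpc : (p.concat hadj').IsPath := by
          rw [← Walk.isPath_reverse_iff, Walk.reverse_concat]
          exact (hp.reverse).cons (by simpa using hc)
        exact ⟨p.concat hadj', hpc, by
          rw [Walk.support_concat]
          exact List.mem_append_left _ ho'p⟩
  intro x hx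
  obtain ⟨w⟩ : (G.induce V').Reachable ⟨o', ho'⟩ ⟨x, hx⟩ := hconn _ _
  obtain ⟨p0, hp0⟩ := hG.isConnected.exists_walk_length_eq_dist o o'
  obtain ⟨p, hp, ho'p⟩ := key w ⟨p0, p0.isPath_of_length_eq_dist hp0, Walk.end_mem_support _⟩
  exact tree_split hG hp ho'p
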